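/- arXiv:1204.3873 — 7 statements merged into one kernel-verified Lean document; each statement's English description precedes it below -/
import Mathlib

section
/- For any unit vectors y, z in R^d and any real α ≥ 1, we have ‖y − z‖ + α² − 1 ≤ (√5/2)·‖y − αz‖·(1 + α). -/
theorem stmt_0 (d : ℕ) (y z : EuclideanSpace ℝ (Fin d))
    (hy : ‖y‖ = 1) (hz : ‖z‖ = 1) (α : ℝ) (hα : 1 ≤ α) :
    ‖y - z‖ + α ^ 2 - 1 ≤ Real.sqrt 5 / 2 * ‖y - α • z‖ * (1 + α) := by
  have ht : ‖y - α • z‖ ^ 2 = (α - 1) ^ 2 + α * ‖y - z‖ ^ 2 := by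
    have h1 : ‖y - α • z‖ ^ 2 = ‖y‖ ^ 2 - 2 * (α * inner ℝ y z) + (|α| * ‖z‖) ^ 2 := by
      rw [@norm_sub_sq_real, real_inner_smul_right, norm_smul]
      simp
    have h2 : ‖y - z‖ ^ 2 = ‖y‖ ^ 2 - 2 * inner ℝ y z + ‖z‖ ^ 2 := norm_sub_sq_real y z
    rw [h1, h2, hy, hz, abs_of_nonneg (by linarith : (0:ℝ) ≤ α)]
    ring
  set s := ‖y - z‖ with hsdef
  set N := ‖y - α • z‖ with hNdef
  have hs0 : 0 ≤ s := norm_nonneg _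
  have hN0 : 0 ≤ N := norm_nonneg _
  have h5 : Real.sqrt 5 ^ 2 = 5 := Real.sq_sqrt (by norm_num)
  have h5' : 0 ≤ Real.sqrt 5 := Real.sqrt_nonneg 5
  have hL0 : 0 ≤ s + α ^ 2 - 1 := by nlinarith
  have hR0 : 0 ≤ Real.sqrt 5 / 2 * N * (1 + α) := by positivity
  have hkey : (s + α ^ 2 - 1) ^ 2 ≤ (Real.sqrt 5 / 2 * N * (1 + α)) ^ 2 := by
    have hexp : (Real.sqrt 5 / 2 * N * (1 + α)) ^ 2
        = 5 / 4 * ((α - 1) ^ 2 + α * s ^ 2) * (1 + α) ^ 2 := by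
      rw [mul_pow, mul_pow, div_pow, h5, ← ht]; ring
    rw [hexp]
    nlinarith [sq_nonneg ((s - (α - 1) / 2) * (1 + α)),
      mul_nonneg (mul_nonneg hs0 (by linarith : (0:ℝ) ≤ α - 1))
        (by nlinarith : (0:ℝ) ≤ (1 + α) ^ 2 - 2 * (1 + α)),
      mul_nonneg (sq_nonneg s) (by nlinarith : (0:ℝ) ≤ (1 + α) ^ 2 - 4),
      mul_nonneg (sq_nonneg s) (by nlinarith : (0:ℝ) ≤ (α - 1) * (1 + α) ^ 2)]
  nlinarith [hkey, hL0, hR0]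
end

section
/- For all t ∈ [0,2] and α ≥ 1, the inequality (t + α² − 1)² ≤ (5/4)·((α² − 1)² + α·t²·(1+α)²) holds. -/
theorem stmt_3 (t α : ℝ) (ht0 : 0 ≤ t) (ht2 : t ≤ 2) (hα : 1 ≤ α) :
    (t + α ^ 2 - 1) ^ 2 ≤ 5 / 4 * ((α ^ 2 - 1) ^ 2 + α * t ^ 2 * (1 + α) ^ 2) := by
  nlinarith [sq_nonneg ((α^2-1)/2 - 2*t), mul_nonneg (sq_nonneg t) (by nlinarith [sq_nonneg (α-1), sq_nonneg (α+1)] : (0:ℝ) ≤ α*(1+α)^2 - 4)]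
end

section
/- Let x : V → R^d with all values of unit norm or zero (v_i ∈ S^{d-1} ∪ {0}), not identically zero. Then η(x) ≤ η₁(x), where η(x) = (1/2)·Σ_{ij} w_{ij}‖x_i − ρ_{ij}x_j‖² / Σ_i d_i‖x_i‖² and η₁(x) = Σ_{ij} w_{ij}‖x_i − ρ_{ij}x_j‖ / Σ_i d_i‖x_i‖. -/
open Matrix

lemma norm_toEuclideanLin_of_orthogonal {d : ℕ} (A : Matrix (Fin d) (Fin d) ℝ)
    (hA : A ∈ Matrix.orthogonalGroup (Fin d) ℝ) (v : EuclideanSpace ℝ (Fin d)) :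
    ‖Matrix.toEuclideanLin A v‖ = ‖v‖ := by
  have h1 : Aᵀ * A = 1 := by
    rw [Matrix.mem_orthogonalGroup_iff'] at hA
    simpa using hA
  have hadj : Matrix.toEuclideanLin Aᴴ (Matrix.toEuclideanLin A v) = v := by
    simp [Matrix.toEuclideanLin_apply, Matrix.mulVec_mulVec]
    rw [h1]
    simp
  have hinner : inner ℝ (Matrix.toEuclideanLin A v) (Matrix.toEuclideanLin A v) = (inner ℝ v v : ℝ) := by
    conv_lhs => rw [← real_inner_comm]
    rw [Matrix.toEuclideanLin_conjTranspose_eq_adjoint] at hadj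
    rw [← LinearMap.adjoint_inner_left, hadj]
  have := congrArg Real.sqrt hinner
  rwa [real_inner_self_eq_norm_sq, real_inner_self_eq_norm_sq,
    Real.sqrt_sq (norm_nonneg _), Real.sqrt_sq (norm_nonneg _)] at this

theorem stmt_8 (n d : ℕ) (w : Fin n → Fin n → ℝ)
    (hw : ∀ i j, 0 ≤ w i j) (hwsymm : ∀ i j, w i j = w j i)
    (hdeg : ∀ i, 0 < ∑ j, w i j)
    (ρ : Fin n → Fin n → Matrix (Fin d) (Fin d) ℝ)
    (hρ : ∀ i j, ρ i j ∈ Matrix.orthogonalGroup (Fin d) ℝ)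
    (hρsymm : ∀ i j, ρ j i = (ρ i j)ᵀ)
    (x : Fin n → EuclideanSpace ℝ (Fin d))
    (hx : ∀ i, ‖x i‖ = 0 ∨ ‖x i‖ = 1)
    (hpos : 0 < ∑ i, (∑ j, w i j) * ‖x i‖) :
    ((1 / 2) * ∑ i, ∑ j, w i j * ‖x i - Matrix.toEuclideanLin (ρ i j) (x j)‖ ^ 2) /
        (∑ i, (∑ j, w i j) * ‖x i‖ ^ 2)
      ≤ (∑ i, ∑ j, w i j * ‖x i - Matrix.toEuclideanLin (ρ i j) (x j)‖) /
        (∑ i, (∑ j, w i j) * ‖x i‖) := by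
  have hxle : ∀ i, ‖x i‖ ≤ 1 := by
    intro i; rcases hx i with h | h <;> rw [h] <;> norm_num
  have hdenom : (∑ i, (∑ j, w i j) * ‖x i‖ ^ 2) = ∑ i, (∑ j, w i j) * ‖x i‖ := by
    apply Finset.sum_congr rfl
    intro i _
    rcases hx i with h | h <;> rw [h] <;> ring
  rw [hdenom]
  have hnum : ((1 / 2) * ∑ i, ∑ j, w i j * ‖x i - Matrix.toEuclideanLin (ρ i j) (x j)‖ ^ 2)
      ≤ ∑ i, ∑ j, w i j * ‖x i - Matrix.toEuclideanLin (ρ i j) (x j)‖ := by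
    rw [Finset.mul_sum]
    apply Finset.sum_le_sum
    intro i _
    rw [Finset.mul_sum]
    apply Finset.sum_le_sum
    intro j _
    set t := ‖x i - Matrix.toEuclideanLin (ρ i j) (x j)‖ with ht
    have htn : 0 ≤ t := norm_nonneg _
    have ht2 : t ≤ 2 := by
      calc t ≤ ‖x i‖ + ‖Matrix.toEuclideanLin (ρ i j) (x j)‖ := norm_sub_le _ _
        _ ≤ 1 + 1 := by
            rw [norm_toEuclideanLin_of_orthogonal (ρ i j) (hρ i j)]
            exact add_le_add (hxle i) (hxle j)
        _ = 2 := by norm_num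
    nlinarith [mul_nonneg (hw i j) (mul_nonneg htn (by linarith : (0:ℝ) ≤ 2 - t))]
  exact div_le_div_of_nonneg_right hnum hpos.le
end

section
/- Let x_i, x_j ∈ R^d with ‖x_j‖ ≤ ‖x_i‖ ≤ 1, x_j ≠ 0, and let u be uniformly distributed on [0,1]. Define x_k^u = x_k/‖x_k‖ if ‖x_k‖² > u and x_k^u = 0 otherwise. Then E_u ‖x_i^u − x_j^u‖ = ‖x_j‖²·‖x_i/‖x_i‖ − x_j/‖x_j‖‖ + (‖x_i‖² − ‖x_j‖²). -/
open MeasureTheory Set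

lemma ind_integrable (c : ℝ) :
    IntervalIntegrable (fun u => if u < c then (1:ℝ) else 0) volume 0 1 := by
  have h : (fun u => if u < c then (1:ℝ) else 0) = Set.indicator (Set.Iio c) (fun _ => 1) := by
    funext u; simp [Set.indicator_apply]
  rw [h, intervalIntegrable_iff]
  exact (integrableOn_const (by simp) (by simp)).indicator measurableSet_Iio

lemma ind_integral (c : ℝ) (h0 : 0 ≤ c) (h1 : c ≤ 1) :
    ∫ u in (0:ℝ)..1, (if u < c then (1:ℝ) else 0) = c := by
  have h : (fun u => if u < c then (1:ℝ) else 0) = Set.indicator (Set.Iio c) (fun _ => 1) := by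
    funext u; simp [Set.indicator_apply]
  rw [intervalIntegral.integral_of_le (by norm_num), h,
    MeasureTheory.setIntegral_indicator measurableSet_Iio]
  have hs : Set.Ioc (0:ℝ) 1 ∩ Set.Iio c = Set.Ioo 0 c := by
    ext x
    simp only [Set.mem_inter_iff, Set.mem_Ioc, Set.mem_Iio, Set.mem_Ioo]
    constructor
    · rintro ⟨⟨hx0, _⟩, hxc⟩; exact ⟨hx0, hxc⟩
    · rintro ⟨hx0, hxc⟩; exact ⟨⟨hx0, by linarith⟩, hxc⟩
  rw [hs]
  simp [Real.volume_Ioo, h0]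

theorem stmt_10 (d : ℕ) (xi xj : EuclideanSpace ℝ (Fin d))
    (hji : ‖xj‖ ≤ ‖xi‖) (hi1 : ‖xi‖ ≤ 1) (hj : xj ≠ 0) :
    (∫ u in (0:ℝ)..1,
        ‖(if u < ‖xi‖ ^ 2 then ‖xi‖⁻¹ • xi else 0) -
          (if u < ‖xj‖ ^ 2 then ‖xj‖⁻¹ • xj else 0)‖)
      = ‖xj‖ ^ 2 * ‖‖xi‖⁻¹ • xi - ‖xj‖⁻¹ • xj‖ + (‖xi‖ ^ 2 - ‖xj‖ ^ 2) := by
  have hja : (0:ℝ) < ‖xj‖ := norm_pos_iff.2 hj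
  have hia : (0:ℝ) < ‖xi‖ := lt_of_lt_of_le hja hji
  set C : ℝ := ‖‖xi‖⁻¹ • xi - ‖xj‖⁻¹ • xj‖ with hC
  set a : ℝ := ‖xj‖ ^ 2 with ha
  set b : ℝ := ‖xi‖ ^ 2 with hb
  have hab : a ≤ b := by
    apply pow_le_pow_left₀ (le_of_lt hja) hji
  have ha0 : 0 < a := by positivity
  have hb1 : b ≤ 1 := by
    rw [hb]; nlinarith
  have hfeq : ∀ u : ℝ,
      ‖(if u < b then ‖xi‖⁻¹ • xi else 0) - (if u < a then ‖xj‖⁻¹ • xj else 0)‖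
        = (C - 1) * (if u < a then (1:ℝ) else 0) + (if u < b then (1:ℝ) else 0) := by
    intro u
    by_cases h1 : u < a
    · have h2 : u < b := lt_of_lt_of_le h1 hab
      simp [h1, h2, hC]
    · by_cases h2 : u < b
      · simp only [h1, h2, if_true, if_false, sub_zero, mul_zero, zero_add, mul_one]
        rw [norm_smul, norm_inv, norm_norm, inv_mul_cancel₀ (ne_of_gt hia)]
      · simp [h1, h2]
  calc (∫ u in (0:ℝ)..1,
        ‖(if u < b then ‖xi‖⁻¹ • xi else 0) - (if u < a then ‖xj‖⁻¹ • xj else 0)‖)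
      = ∫ u in (0:ℝ)..1,
        ((C - 1) * (if u < a then (1:ℝ) else 0) + (if u < b then (1:ℝ) else 0)) := by
        apply intervalIntegral.integral_congr
        intro u _
        exact hfeq u
    _ = (C - 1) * (∫ u in (0:ℝ)..1, (if u < a then (1:ℝ) else 0))
        + ∫ u in (0:ℝ)..1, (if u < b then (1:ℝ) else 0) := by
        rw [intervalIntegral.integral_add ((ind_integrable a).const_mul _) (ind_integrable b),
          intervalIntegral.integral_const_mul]
    _ = (C - 1) * a + b := by
        rw [ind_integral a (le_of_lt ha0) (le_trans hab hb1), ind_integral b (by positivity) hb1]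
    _ = a * C + (b - a) := by ring
end

section
/- Let x_i, x_j ∈ R^d with ‖x_j‖ ≤ ‖x_i‖ ≤ 1 and x_j ≠ 0. Then ‖x_j‖²·‖x_i/‖x_i‖ − x_j/‖x_j‖‖ + (‖x_i‖² − ‖x_j‖²) ≤ (√5/2)·‖x_i − x_j‖·(‖x_i‖ + ‖x_j‖). -/
lemma key_ineq (a b s : ℝ) (hb : 0 < b) (hba : b ≤ a) (hs : 0 ≤ s) :
    (b ^ 2 * s + (a ^ 2 - b ^ 2)) ^ 2
      ≤ 5 / 4 * ((a - b) ^ 2 + a * b * s ^ 2) * (a + b) ^ 2 := by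
  have h4 : 0 ≤ a * (a + b) ^ 2 - 4 * b ^ 3 := by
    nlinarith [mul_nonneg (sub_nonneg.2 hba) (sq_nonneg (a + b)),
      mul_nonneg (mul_nonneg hb.le (sub_nonneg.2 hba)) (by linarith : (0:ℝ) ≤ a + 3 * b)]
  have hA : 0 < 5 / 4 * (a * b) * (a + b) ^ 2 - b ^ 4 := by
    nlinarith [mul_nonneg (mul_nonneg hb.le (sub_nonneg.2 hba)) (by linarith : (0:ℝ) ≤ a + 3 * b),
      mul_nonneg (sub_nonneg.2 hba) (mul_nonneg hb.le (sq_nonneg (a + b))), pow_pos hb 4]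
  have hdisc : 0 ≤ (a + b) ^ 2 * (a - b) ^ 2 * (b * (a * (a + b) ^ 2 - 4 * b ^ 3)) := by
    positivity
  nlinarith [sq_nonneg (2 * (5 / 4 * (a * b) * (a + b) ^ 2 - b ^ 4) * s - 2 * b ^ 2 * (a ^ 2 - b ^ 2)),
    mul_pos hA hA, hdisc, hA, sq_nonneg s]

theorem stmt_11 (d : ℕ) (xi xj : EuclideanSpace ℝ (Fin d))
    (hji : ‖xj‖ ≤ ‖xi‖) (hi1 : ‖xi‖ ≤ 1) (hj : xj ≠ 0) :
    ‖xj‖ ^ 2 * ‖‖xi‖⁻¹ • xi - ‖xj‖⁻¹ • xj‖ + (‖xi‖ ^ 2 - ‖xj‖ ^ 2)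
      ≤ Real.sqrt 5 / 2 * ‖xi - xj‖ * (‖xi‖ + ‖xj‖) := by
  set a := ‖xi‖ with ha
  set b := ‖xj‖ with hbdef
  have hb : 0 < b := norm_pos_iff.mpr hj
  have hapos : 0 < a := lt_of_lt_of_le hb hji
  set s := ‖‖xi‖⁻¹ • xi - ‖xj‖⁻¹ • xj‖ with hsdef
  set c := ‖xi - xj‖ with hcdef
  have hs : 0 ≤ s := norm_nonneg _
  have hc : 0 ≤ c := norm_nonneg _
  set p := (inner ℝ xi xj : ℝ) with hp
  have hcsq : c ^ 2 = a ^ 2 - 2 * p + b ^ 2 := by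
    rw [hcdef, norm_sub_sq_real]
  have hssq : a * b * s ^ 2 = 2 * a * b - 2 * p := by
    have : s ^ 2 = ‖(‖xi‖⁻¹ • xi)‖ ^ 2 - 2 * (inner ℝ (‖xi‖⁻¹ • xi) (‖xj‖⁻¹ • xj) : ℝ)
        + ‖(‖xj‖⁻¹ • xj)‖ ^ 2 := by
      rw [hsdef, norm_sub_sq_real]
    rw [norm_smul, norm_smul, real_inner_smul_left, real_inner_smul_right] at this
    simp only [norm_inv, norm_norm] at this
    rw [← hp] at this
    rw [this, inv_mul_cancel₀ hapos.ne', inv_mul_cancel₀ hb.ne']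
    have ha0 : ‖xi‖ ≠ 0 := hapos.ne'
    have hb0 : ‖xj‖ ≠ 0 := hb.ne'
    field_simp
    ring
  have hcc : c ^ 2 = (a - b) ^ 2 + a * b * s ^ 2 := by
    rw [hssq, hcsq]; ring
  have hL : 0 ≤ b ^ 2 * s + (a ^ 2 - b ^ 2) := by
    nlinarith [mul_nonneg (sq_nonneg b) hs]
  have hR : 0 ≤ Real.sqrt 5 / 2 * c * (a + b) := by positivity
  have hsq5 : Real.sqrt 5 ^ 2 = 5 := Real.sq_sqrt (by norm_num)
  have hsq : (b ^ 2 * s + (a ^ 2 - b ^ 2)) ^ 2 ≤ (Real.sqrt 5 / 2 * c * (a + b)) ^ 2 := by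
    have key := key_ineq a b s hb hji hs
    calc (b ^ 2 * s + (a ^ 2 - b ^ 2)) ^ 2
        ≤ 5 / 4 * ((a - b) ^ 2 + a * b * s ^ 2) * (a + b) ^ 2 := key
      _ = (Real.sqrt 5 / 2 * c * (a + b)) ^ 2 := by rw [← hcc]; rw [mul_pow, mul_pow]
                                                    rw [div_pow, hsq5]; ring
  nlinarith [hsq, hL, hR]
end

section
/- Let G be a finite weighted graph with normalized graph Laplacian L₀ and synchronization data ρ, and let x : V → R^d. Then there exists α ≥ 0 such that r = x − α·x̃ (where x̃ is the entrywise normalization of x) satisfies Σ_i d_i‖r_i‖² ≤ (η(x)/λ₂(L₀))·Σ_i d_i‖x_i‖², where λ₂(L₀) is the second smallest eigenvalue of the normalized graph Laplacian, assumed positive. -/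
open Matrix
open scoped Classical

local notation "⟪" x ", " y "⟫" => inner (𝕜 := ℝ) x y

lemma euclid_inner {n : ℕ} (a b : Fin n → ℝ) :
    ⟪(WithLp.equiv 2 (Fin n → ℝ)).symm a, (WithLp.equiv 2 (Fin n → ℝ)).symm b⟫
      = ∑ i, a i * b i := by
  simp [PiLp.inner_apply, RCLike.inner_apply, conj_trivial, mul_comm]

lemma aux_orthnorm {d : ℕ} (Q : Matrix (Fin d) (Fin d) ℝ)
    (hQ : Q ∈ Matrix.orthogonalGroup (Fin d) ℝ) (v : EuclideanSpace ℝ (Fin d)) :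
    ‖Matrix.toEuclideanLin Q v‖ = ‖v‖ := by
  have h1 : star Q * Q = 1 := (Matrix.mem_orthogonalGroup_iff' (Fin d) ℝ).1 hQ
  have h2 : Matrix.toEuclideanLin (star Q) (Matrix.toEuclideanLin Q v) = v := by
    apply PiLp.ext
    intro i
    simp [Matrix.toEuclideanLin_apply, Matrix.mulVec_mulVec, h1, Matrix.one_mulVec]
  have h3 : ⟪Matrix.toEuclideanLin Q v, Matrix.toEuclideanLin Q v⟫ = ⟪v, v⟫ := by
    have h4 := LinearMap.adjoint_inner_right (Matrix.toEuclideanLin Q) v (Matrix.toEuclideanLin Q v)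
    rw [← Matrix.toEuclideanLin_conjTranspose_eq_adjoint] at h4
    have h5 : Qᴴ = star Q := rfl
    rw [h5, h2] at h4
    exact h4.symm
  have h6 : ‖Matrix.toEuclideanLin Q v‖ ^ 2 = ‖v‖ ^ 2 := by
    rw [← real_inner_self_eq_norm_sq, h3, real_inner_self_eq_norm_sq]
  have h7 := congrArg Real.sqrt h6
  rwa [Real.sqrt_sq (norm_nonneg _), Real.sqrt_sq (norm_nonneg _)] at h7

lemma aux_gap {n : ℕ} (hn : 1 < n) (A : Matrix (Fin n) (Fin n) ℝ) (hA : A.IsHermitian)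
    (lam2 : ℝ) (hlam2 : lam2 = (hA.eigenvalues ∘ Tuple.sort hA.eigenvalues) ⟨1, hn⟩)
    (hpos : 0 < lam2) (z y : EuclideanSpace ℝ (Fin n)) (hz : z ≠ 0)
    (hker : Matrix.toEuclideanLin A z = 0) (horth : ⟪z, y⟫ = 0) :
    lam2 * ‖y‖ ^ 2 ≤ ⟪y, Matrix.toEuclideanLin A y⟫ := by
  classical
  have hsym : ∀ u v : EuclideanSpace ℝ (Fin n),
      ⟪Matrix.toEuclideanLin A u, v⟫ = ⟪u, Matrix.toEuclideanLin A v⟫ :=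
    (Matrix.isHermitian_iff_isSymmetric.1 hA)
  set μ := hA.eigenvalues with hμ
  set v := hA.eigenvectorBasis with hv
  have hev : ∀ k, Matrix.toEuclideanLin A (v k) = μ k • v k := by
    intro k
    have h := hA.mulVec_eigenvectorBasis k
    apply PiLp.ext
    intro i
    have := congrFun h i
    simpa [Matrix.toEuclideanLin_apply] using this
  have hvky : ∀ k (u : EuclideanSpace ℝ (Fin n)),
      ⟪v k, Matrix.toEuclideanLin A u⟫ = μ k * ⟪v k, u⟫ := by
    intro k u
    rw [← hsym, hev, real_inner_smul_left]
  have hdecomp : ∀ u : EuclideanSpace ℝ (Fin n),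
      ⟪u, Matrix.toEuclideanLin A u⟫ = ∑ k, μ k * ⟪v k, u⟫ ^ 2 := by
    intro u
    rw [← v.sum_inner_mul_inner u (Matrix.toEuclideanLin A u)]
    refine Finset.sum_congr rfl fun k _ => ?_
    rw [hvky, real_inner_comm u (v k)]
    ring
  have hpars : ∀ u : EuclideanSpace ℝ (Fin n), ‖u‖ ^ 2 = ∑ k, ⟪v k, u⟫ ^ 2 := by
    intro u
    rw [← real_inner_self_eq_norm_sq, ← v.sum_inner_mul_inner u u]
    refine Finset.sum_congr rfl fun k _ => ?_
    rw [real_inner_comm u (v k)]; ring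
  have hzc : ∀ k, μ k * ⟪v k, z⟫ = 0 := by
    intro k
    rw [← hvky, hker, inner_zero_right]
  set σ := Tuple.sort μ with hσ
  set k₀ := σ ⟨0, Nat.lt_of_lt_of_le Nat.zero_lt_one hn.le⟩ with hk₀
  have hbig : ∀ k, k ≠ k₀ → lam2 ≤ μ k := by
    intro k hk
    have hm : σ.symm k ≠ ⟨0, Nat.lt_of_lt_of_le Nat.zero_lt_one hn.le⟩ := by
      intro h
      apply hk
      rw [hk₀, ← h, Equiv.apply_symm_apply]
    have h1 : (⟨1, hn⟩ : Fin n) ≤ σ.symm k := by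
      have : 0 < (σ.symm k).val := Nat.pos_of_ne_zero (fun h0 => hm (Fin.ext h0))
      exact this
    have hmono := Tuple.monotone_sort μ h1
    have h2 : (μ ∘ ⇑σ) (σ.symm k) = μ k := by simp
    rw [hlam2]
    exact hmono.trans_eq h2
  have hzk : ∀ k, k ≠ k₀ → ⟪v k, z⟫ = 0 := by
    intro k hk
    have := hzc k
    rcases mul_eq_zero.1 this with h | h
    · exact absurd h (ne_of_gt (lt_of_lt_of_le hpos (hbig k hk)))
    · exact h
  have hk0ne : ⟪v k₀, z⟫ ≠ 0 := by
    intro h0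
    apply hz
    have : ‖z‖ ^ 2 = 0 := by
      rw [hpars z]
      refine Finset.sum_eq_zero fun k _ => ?_
      by_cases hk : k = k₀
      · rw [hk, h0]; ring
      · rw [hzk k hk]; ring
    exact norm_eq_zero.1 (pow_eq_zero_iff two_ne_zero |>.1 this)
  have hcy : ⟪v k₀, y⟫ = 0 := by
    have hexp : ⟪z, y⟫ = ⟪z, v k₀⟫ * ⟪v k₀, y⟫ := by
      rw [← v.sum_inner_mul_inner z y]
      rw [Finset.sum_eq_single k₀]
      · intro k _ hk
        have h := hzk k hk
        rw [real_inner_comm] at h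
        rw [h]; ring
      · intro h; exact absurd (Finset.mem_univ k₀) h
    rw [horth] at hexp
    rcases mul_eq_zero.1 hexp.symm with h | h
    · rw [real_inner_comm] at h; exact absurd h hk0ne
    · exact h
  rw [hdecomp y, hpars y, Finset.mul_sum]
  refine Finset.sum_le_sum fun k _ => ?_
  by_cases hk : k = k₀
  · rw [hk, hcy]; ring_nf; exact le_rfl
  · exact mul_le_mul_of_nonneg_right (hbig k hk) (sq_nonneg _)
lemma aux_Lker {n : ℕ} (w : Fin n → Fin n → ℝ) (hdeg : ∀ i, 0 < ∑ j, w i j) :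
    (1 - Matrix.of (fun i j : Fin n =>
        w i j / (Real.sqrt (∑ k, w i k) * Real.sqrt (∑ k, w j k)))) *ᵥ
      (fun i => Real.sqrt (∑ k, w i k)) = 0 := by
  funext i
  have hs : ∀ i, 0 < Real.sqrt (∑ k, w i k) := fun i => Real.sqrt_pos.2 (hdeg i)
  rw [Matrix.sub_mulVec, Matrix.one_mulVec]
  have hM : (Matrix.of (fun i j : Fin n =>
      w i j / (Real.sqrt (∑ k, w i k) * Real.sqrt (∑ k, w j k))) *ᵥ
      (fun i => Real.sqrt (∑ k, w i k))) i = Real.sqrt (∑ k, w i k) := by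
    simp only [Matrix.mulVec, dotProduct, Matrix.of_apply]
    have h1 : ∀ j, w i j / (Real.sqrt (∑ k, w i k) * Real.sqrt (∑ k, w j k)) *
        Real.sqrt (∑ k, w j k) = w i j / Real.sqrt (∑ k, w i k) := by
      intro j
      have hi := (hs i).ne'
      have hj := (hs j).ne'
      field_simp
    rw [Finset.sum_congr rfl (fun j _ => h1 j), ← Finset.sum_div, Real.div_sqrt]
  rw [Pi.sub_apply, hM, sub_self, Pi.zero_apply]

lemma aux_quad {n : ℕ} (w : Fin n → Fin n → ℝ) (hdeg : ∀ i, 0 < ∑ j, w i j) (a : Fin n → ℝ) :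
    ⟪(WithLp.equiv 2 (Fin n → ℝ)).symm (fun i => Real.sqrt (∑ k, w i k) * a i),
      Matrix.toEuclideanLin (1 - Matrix.of (fun i j : Fin n =>
        w i j / (Real.sqrt (∑ k, w i k) * Real.sqrt (∑ k, w j k))))
        ((WithLp.equiv 2 (Fin n → ℝ)).symm (fun i => Real.sqrt (∑ k, w i k) * a i))⟫
    = (∑ i, (∑ j, w i j) * a i ^ 2) - ∑ i, ∑ j, w i j * (a i * a j) := by
  have hs : ∀ i, 0 < Real.sqrt (∑ k, w i k) := fun i => Real.sqrt_pos.2 (hdeg i)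
  rw [WithLp.equiv_symm_apply, Matrix.toEuclideanLin_apply_piLp_toLp, ← WithLp.equiv_symm_apply, euclid_inner, ← Finset.sum_sub_distrib]
  refine Finset.sum_congr rfl fun i _ => ?_
  rw [Matrix.sub_mulVec, Matrix.one_mulVec, Pi.sub_apply]
  have hM : (Matrix.of (fun i j : Fin n =>
      w i j / (Real.sqrt (∑ k, w i k) * Real.sqrt (∑ k, w j k))) *ᵥ
      (fun i => Real.sqrt (∑ k, w i k) * a i)) i
      = (∑ j, w i j * a j) / Real.sqrt (∑ k, w i k) := by
    simp only [Matrix.mulVec, dotProduct, Matrix.of_apply]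
    have h1 : ∀ j, w i j / (Real.sqrt (∑ k, w i k) * Real.sqrt (∑ k, w j k)) *
        (Real.sqrt (∑ k, w j k) * a j) = w i j * a j / Real.sqrt (∑ k, w i k) := by
      intro j
      have hi := (hs i).ne'
      have hj := (hs j).ne'
      field_simp
    rw [Finset.sum_congr rfl (fun j _ => h1 j), ← Finset.sum_div]
  rw [hM]
  have hDi : Real.sqrt (∑ k, w i k) * Real.sqrt (∑ k, w i k) = ∑ k, w i k :=
    Real.mul_self_sqrt (hdeg i).le
  have h2 : ∑ j, w i j * (a i * a j) = a i * ∑ j, w i j * a j := by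
    rw [Finset.mul_sum]
    exact Finset.sum_congr rfl fun j _ => by ring
  rw [h2, mul_sub]
  have hne := (hs i).ne'
  congr 1
  · have h3 : Real.sqrt (∑ k, w i k) * a i * (Real.sqrt (∑ k, w i k) * a i)
        = Real.sqrt (∑ k, w i k) * Real.sqrt (∑ k, w i k) * a i ^ 2 := by ring
    rw [h3, hDi]
  · have h4 : Real.sqrt (∑ k, w i k) * a i * ((∑ j, w i j * a j) / Real.sqrt (∑ k, w i k))
        = a i * (Real.sqrt (∑ k, w i k) * ((∑ j, w i j * a j) / Real.sqrt (∑ k, w i k))) := by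
      ring
    rw [h4, mul_div_cancel₀ _ hne]

lemma aux_normterm {d : ℕ} (v : EuclideanSpace ℝ (Fin d)) (α : ℝ) :
    ‖v - α • (if v = 0 then 0 else ‖v‖⁻¹ • v)‖ ^ 2 ≤ (‖v‖ - α) ^ 2 := by
  by_cases h : v = 0
  · simp only [h, if_pos, smul_zero, sub_zero, norm_zero]
    nlinarith [sq_nonneg α]
  · rw [if_neg h]
    have hr : 0 < ‖v‖ := norm_pos_iff.2 h
    have he : v - α • (‖v‖⁻¹ • v) = (1 - α * ‖v‖⁻¹) • v := by
      rw [smul_smul, sub_smul, one_smul]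
    rw [he, norm_smul, Real.norm_eq_abs, mul_pow, sq_abs]
    apply le_of_eq
    field_simp

theorem stmt_13 (n d : ℕ) (hn : 1 < n) (w : Fin n → Fin n → ℝ)
    (hw : ∀ i j, 0 ≤ w i j) (hwsymm : ∀ i j, w i j = w j i)
    (hdeg : ∀ i, 0 < ∑ j, w i j)
    (ρ : Fin n → Fin n → Matrix (Fin d) (Fin d) ℝ)
    (hρ : ∀ i j, ρ i j ∈ Matrix.orthogonalGroup (Fin d) ℝ)
    (hρsymm : ∀ i j, ρ j i = (ρ i j)ᵀ)
    (L0 : Matrix (Fin n) (Fin n) ℝ)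
    (hL0 : L0 = 1 - Matrix.of (fun i j : Fin n =>
        w i j / (Real.sqrt (∑ k, w i k) * Real.sqrt (∑ k, w j k))))
    (hherm : L0.IsHermitian)
    (lam2 : ℝ)
    (hlam2 : lam2 = (hherm.eigenvalues ∘ Tuple.sort hherm.eigenvalues) ⟨1, hn⟩)
    (hpos : 0 < lam2)
    (x : Fin n → EuclideanSpace ℝ (Fin d)) :
    ∃ α : ℝ, 0 ≤ α ∧
      ∑ i, (∑ j, w i j) * ‖x i - α • (if x i = 0 then 0 else ‖x i‖⁻¹ • x i)‖ ^ 2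
        ≤ (((1 / 2) * ∑ i, ∑ j, w i j * ‖x i - Matrix.toEuclideanLin (ρ i j) (x j)‖ ^ 2) /
              (∑ i, (∑ j, w i j) * ‖x i‖ ^ 2)) / lam2 *
            ∑ i, (∑ j, w i j) * ‖x i‖ ^ 2 := by
  classical
  by_cases hS : (∑ i, (∑ j, w i j) * ‖x i‖ ^ 2) = 0
  · refine ⟨0, le_rfl, ?_⟩
    have hx0 : ∀ i, x i = 0 := by
      intro i
      have hnn : ∀ i ∈ Finset.univ, (0:ℝ) ≤ (∑ j, w i j) * ‖x i‖ ^ 2 :=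
        fun i _ => mul_nonneg (hdeg i).le (sq_nonneg _)
      have h0 := (Finset.sum_eq_zero_iff_of_nonneg hnn).1 hS i (Finset.mem_univ i)
      rcases mul_eq_zero.1 h0 with h | h
      · exact absurd h (ne_of_gt (hdeg i))
      · exact norm_eq_zero.1 ((pow_eq_zero_iff two_ne_zero).1 h)
    rw [hS, mul_zero]
    apply le_of_eq
    refine Finset.sum_eq_zero fun i _ => ?_
    simp [hx0 i]
  · haveI hne : Nonempty (Fin n) := ⟨⟨0, by omega⟩⟩
    have hDtpos : (0:ℝ) < ∑ i, ∑ j, w i j :=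
      Finset.sum_pos (fun i _ => hdeg i) Finset.univ_nonempty
    set α := (∑ i, (∑ j, w i j) * ‖x i‖) / (∑ i, ∑ j, w i j) with hα
    have hα0 : 0 ≤ α := div_nonneg (Finset.sum_nonneg fun i _ =>
      mul_nonneg (hdeg i).le (norm_nonneg _)) hDtpos.le
    refine ⟨α, hα0, ?_⟩
    have hs : ∀ i, 0 < Real.sqrt (∑ k, w i k) := fun i => Real.sqrt_pos.2 (hdeg i)
    have hss : ∀ i, Real.sqrt (∑ k, w i k) * Real.sqrt (∑ k, w i k) = ∑ j, w i j :=
      fun i => Real.mul_self_sqrt (hdeg i).le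
    set z : EuclideanSpace ℝ (Fin n) :=
      (WithLp.equiv 2 (Fin n → ℝ)).symm (fun i => Real.sqrt (∑ k, w i k)) with hzdef
    set y : EuclideanSpace ℝ (Fin n) :=
      (WithLp.equiv 2 (Fin n → ℝ)).symm
        (fun i => Real.sqrt (∑ k, w i k) * (‖x i‖ - α)) with hydef
    set p : EuclideanSpace ℝ (Fin n) :=
      (WithLp.equiv 2 (Fin n → ℝ)).symm
        (fun i => Real.sqrt (∑ k, w i k) * ‖x i‖) with hpdef
    have hz0 : z ≠ 0 := by
      intro h0
      rw [hzdef] at h0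
      have h2 : Real.sqrt (∑ k, w (⟨0, by omega⟩ : Fin n) k) = 0 := by
        have h1 := congrArg (fun u : EuclideanSpace ℝ (Fin n) =>
          WithLp.equiv 2 (Fin n → ℝ) u ⟨0, by omega⟩) h0
        simpa using h1
      exact absurd h2 (ne_of_gt (hs _))
    have hker : Matrix.toEuclideanLin L0 z = 0 := by
      rw [hzdef, hL0]
      apply PiLp.ext
      intro i
      rw [WithLp.equiv_symm_apply, Matrix.toEuclideanLin_apply_piLp_toLp, aux_Lker w hdeg]
      simp
    have hsym : ∀ u v : EuclideanSpace ℝ (Fin n),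
        ⟪Matrix.toEuclideanLin L0 u, v⟫ = ⟪u, Matrix.toEuclideanLin L0 v⟫ :=
      Matrix.isHermitian_iff_isSymmetric.1 hherm
    have horth : ⟪z, y⟫ = 0 := by
      rw [hzdef, hydef, euclid_inner]
      have h1 : ∀ i, Real.sqrt (∑ k, w i k) * (Real.sqrt (∑ k, w i k) * (‖x i‖ - α))
          = (∑ j, w i j) * ‖x i‖ - (∑ j, w i j) * α := by
        intro i
        rw [← mul_assoc, hss i]
        ring
      rw [Finset.sum_congr rfl fun i _ => h1 i, Finset.sum_sub_distrib, ← Finset.sum_mul, hα,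
        mul_comm (∑ i, ∑ j, w i j), div_mul_cancel₀ _ hDtpos.ne', sub_self]
    have hgap := aux_gap hn L0 hherm lam2 hlam2 hpos z y hz0 hker horth
    have hyp : y = p - α • z := by
      rw [hydef, hpdef, hzdef]
      apply PiLp.ext
      intro i
      simp only [WithLp.equiv_symm_apply, WithLp.ofLp_toLp, PiLp.sub_apply, PiLp.smul_apply, smul_eq_mul]
      ring
    have hyy : ⟪y, Matrix.toEuclideanLin L0 y⟫ = ⟪p, Matrix.toEuclideanLin L0 p⟫ := by
      rw [hyp, map_sub, _root_.map_smul, hker, smul_zero, sub_zero, inner_sub_left]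
      have h1 : ⟪α • z, Matrix.toEuclideanLin L0 p⟫ = 0 := by
        rw [real_inner_smul_left, ← hsym z p, hker]
        simp
      rw [h1, sub_zero]
    have hquad : ⟪p, Matrix.toEuclideanLin L0 p⟫
        = (∑ i, (∑ j, w i j) * ‖x i‖ ^ 2) - ∑ i, ∑ j, w i j * (‖x i‖ * ‖x j‖) := by
      rw [hpdef, hL0]
      exact aux_quad w hdeg (fun i => ‖x i‖)
    have hnormy : ‖y‖ ^ 2 = ∑ i, (∑ j, w i j) * (‖x i‖ - α) ^ 2 := by
      rw [← real_inner_self_eq_norm_sq, hydef, euclid_inner]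
      refine Finset.sum_congr rfl fun i _ => ?_
      have h2 : Real.sqrt (∑ k, w i k) * (‖x i‖ - α) *
          (Real.sqrt (∑ k, w i k) * (‖x i‖ - α))
          = Real.sqrt (∑ k, w i k) * Real.sqrt (∑ k, w i k) * (‖x i‖ - α) ^ 2 := by ring
      rw [h2, hss i]
    have hcmp : ∀ i j, w i j * (‖x i‖ - ‖x j‖) ^ 2
        ≤ w i j * ‖x i - Matrix.toEuclideanLin (ρ i j) (x j)‖ ^ 2 := by
      intro i j
      refine mul_le_mul_of_nonneg_left ?_ (hw i j)
      have habs := abs_norm_sub_norm_le (x i) (Matrix.toEuclideanLin (ρ i j) (x j))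
      rw [aux_orthnorm (ρ i j) (hρ i j) (x j)] at habs
      calc (‖x i‖ - ‖x j‖) ^ 2 = |‖x i‖ - ‖x j‖| ^ 2 := (sq_abs _).symm
        _ ≤ ‖x i - Matrix.toEuclideanLin (ρ i j) (x j)‖ ^ 2 :=
            pow_le_pow_left₀ (abs_nonneg _) habs 2
    have hexp : ∑ i, ∑ j, w i j * (‖x i‖ - ‖x j‖) ^ 2
        = 2 * (∑ i, (∑ j, w i j) * ‖x i‖ ^ 2)
          - 2 * ∑ i, ∑ j, w i j * (‖x i‖ * ‖x j‖) := by
      have e1 : ∑ i, ∑ j, w i j * (‖x i‖ - ‖x j‖) ^ 2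
          = ∑ i, ∑ j, (w i j * ‖x i‖ ^ 2 + w i j * ‖x j‖ ^ 2
              - 2 * (w i j * (‖x i‖ * ‖x j‖))) :=
        Finset.sum_congr rfl fun i _ => Finset.sum_congr rfl fun j _ => by ring
      have e2 : ∑ i, ∑ j, w i j * ‖x i‖ ^ 2 = ∑ i, (∑ j, w i j) * ‖x i‖ ^ 2 :=
        Finset.sum_congr rfl fun i _ => by rw [← Finset.sum_mul]
      have e3 : ∑ i, ∑ j, w i j * ‖x j‖ ^ 2 = ∑ i, (∑ j, w i j) * ‖x i‖ ^ 2 := by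
        rw [Finset.sum_comm]
        refine Finset.sum_congr rfl fun j _ => ?_
        rw [← Finset.sum_mul]
        congr 1
        exact Finset.sum_congr rfl fun i _ => hwsymm i j
      have e4 : ∑ i, ∑ j, (w i j * ‖x i‖ ^ 2 + w i j * ‖x j‖ ^ 2
            - 2 * (w i j * (‖x i‖ * ‖x j‖)))
          = (∑ i, ∑ j, w i j * ‖x i‖ ^ 2) + (∑ i, ∑ j, w i j * ‖x j‖ ^ 2)
            - 2 * ∑ i, ∑ j, w i j * (‖x i‖ * ‖x j‖) := by
        simp only [Finset.sum_sub_distrib, Finset.sum_add_distrib, ← Finset.mul_sum]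
      rw [e1, e4, e2, e3]
      ring
    have h2le : ∑ i, ∑ j, w i j * (‖x i‖ - ‖x j‖) ^ 2
        ≤ ∑ i, ∑ j, w i j * ‖x i - Matrix.toEuclideanLin (ρ i j) (x j)‖ ^ 2 :=
      Finset.sum_le_sum fun i _ => Finset.sum_le_sum fun j _ => hcmp i j
    have hPle : ⟪p, Matrix.toEuclideanLin L0 p⟫
        ≤ (1 / 2) * ∑ i, ∑ j, w i j * ‖x i - Matrix.toEuclideanLin (ρ i j) (x j)‖ ^ 2 := by
      rw [hquad]
      linarith [h2le, hexp]
    have hfin : ∑ i, (∑ j, w i j) * ‖x i - α • (if x i = 0 then 0 else ‖x i‖⁻¹ • x i)‖ ^ 2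
        ≤ ((1 / 2) * ∑ i, ∑ j, w i j * ‖x i - Matrix.toEuclideanLin (ρ i j) (x j)‖ ^ 2)
            / lam2 := by
      have hstep1 : ∑ i, (∑ j, w i j) * ‖x i - α •
            (if x i = 0 then 0 else ‖x i‖⁻¹ • x i)‖ ^ 2
          ≤ ∑ i, (∑ j, w i j) * (‖x i‖ - α) ^ 2 :=
        Finset.sum_le_sum fun i _ =>
          mul_le_mul_of_nonneg_left (aux_normterm (x i) α) (hdeg i).le
      have hstep2 : ∑ i, (∑ j, w i j) * (‖x i‖ - α) ^ 2
          ≤ ((1 / 2) * ∑ i, ∑ j, w i j * ‖x i - Matrix.toEuclideanLin (ρ i j) (x j)‖ ^ 2)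
              / lam2 := by
        rw [← hnormy, le_div_iff₀ hpos]
        calc ‖y‖ ^ 2 * lam2 = lam2 * ‖y‖ ^ 2 := by ring
          _ ≤ ⟪y, Matrix.toEuclideanLin L0 y⟫ := hgap
          _ = ⟪p, Matrix.toEuclideanLin L0 p⟫ := hyy
          _ ≤ _ := hPle
      linarith
    have hRHS : (((1 / 2) * ∑ i, ∑ j, w i j * ‖x i - Matrix.toEuclideanLin (ρ i j) (x j)‖ ^ 2) /
              (∑ i, (∑ j, w i j) * ‖x i‖ ^ 2)) / lam2 *
            ∑ i, (∑ j, w i j) * ‖x i‖ ^ 2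
        = ((1 / 2) * ∑ i, ∑ j, w i j * ‖x i - Matrix.toEuclideanLin (ρ i j) (x j)‖ ^ 2)
            / lam2 := by
      field_simp
    rw [hRHS]
    exact hfin
end

section
/- Let λ₁(L₁) ≤ … ≤ λ_d(L₁) be the d smallest eigenvalues of the normalized Connection Laplacian, and let ν_G = min over group potentials g : V → O(d) of ν(g) = (1/(2d·vol(G)))·Σ_{ij} w_{ij}‖g_i − ρ_{ij}g_j‖_F². Then (1/d)·Σ_{k=1}^d λ_k(L₁) ≤ ν_G. -/
open Matrix

lemma sort_lemma {N dd : ℕ} (hd : 0 < dd) (hdn : dd ≤ N) {v : ℝ} (hv : 0 ≤ v)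
    (ν c : Fin N → ℝ) (hc0 : ∀ m, 0 ≤ c m) (hcv : ∀ m, c m ≤ v)
    (hsum : ∑ m, c m = (dd : ℝ) * v) :
    v * ∑ k : Fin dd, ν (Tuple.sort ν (Fin.castLE hdn k)) ≤ ∑ m, ν m * c m := by
  classical
  set σ := Tuple.sort ν with hσ
  have hmono : Monotone (ν ∘ σ) := Tuple.monotone_sort ν
  set ν' : Fin N → ℝ := fun m => ν (σ m) with hν'
  set c' : Fin N → ℝ := fun m => c (σ m) with hc'
  have hre : ∑ m, ν m * c m = ∑ m, ν' m * c' m :=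
    (Equiv.sum_comp σ (fun m => ν m * c m)).symm
  have hsum' : ∑ m, c' m = (dd : ℝ) * v := by
    rw [hc']; rw [Equiv.sum_comp σ c]; exact hsum
  have hdN : dd - 1 < N := lt_of_lt_of_le (Nat.sub_lt hd one_pos) hdn
  set t : ℝ := ν' ⟨dd - 1, hdN⟩ with ht
  set S : Finset (Fin N) := Finset.univ.filter (fun m => (m : ℕ) < dd) with hS
  have hmem : ∀ m : Fin N, m ∈ S ↔ (m : ℕ) < dd := by intro m; simp [hS]
  have hSmap : S = Finset.univ.map (Fin.castLEEmb hdn) := by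
    ext m
    simp only [hS, Finset.mem_filter, Finset.mem_univ, true_and, Finset.mem_map,
      Fin.castLEEmb_apply]
    constructor
    · intro hm; exact ⟨⟨m, hm⟩, by ext; simp⟩
    · rintro ⟨k, rfl⟩; exact k.is_lt
  have hScard : S.card = dd := by
    rw [hSmap, Finset.card_map, Finset.card_univ, Fintype.card_fin]
  have hSsum : ∑ k : Fin dd, ν' (Fin.castLE hdn k) = ∑ m ∈ S, ν' m := by
    rw [hSmap, Finset.sum_map]
    rfl
  have hlow : ∀ m ∈ S, ν' m ≤ t := by
    intro m hm
    rw [hmem] at hm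
    exact hmono (Fin.mk_le_mk.mpr (Nat.le_sub_one_of_lt hm))
  have hhigh : ∀ m ∈ Sᶜ, t ≤ ν' m := by
    intro m hm
    rw [Finset.mem_compl, hmem, not_lt] at hm
    exact hmono (Fin.mk_le_mk.mpr (le_trans (Nat.sub_le dd 1) hm))
  have split1 : ∑ m, ν' m * c' m = ∑ m ∈ S, ν' m * c' m + ∑ m ∈ Sᶜ, ν' m * c' m :=
    (Finset.sum_add_sum_compl S _).symm
  have splitc : ∑ m ∈ S, c' m + ∑ m ∈ Sᶜ, c' m = (dd:ℝ) * v := by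
    rw [Finset.sum_add_sum_compl]; exact hsum'
  have hb1 : ∑ m ∈ S, t * (c' m - v) ≤ ∑ m ∈ S, ν' m * (c' m - v) := by
    apply Finset.sum_le_sum
    intro m hm
    exact mul_le_mul_of_nonpos_right (hlow m hm) (by linarith [hcv (σ m)])
  have hb2 : ∑ m ∈ Sᶜ, t * c' m ≤ ∑ m ∈ Sᶜ, ν' m * c' m := by
    apply Finset.sum_le_sum
    intro m hm
    exact mul_le_mul_of_nonneg_right (hhigh m hm) (hc0 (σ m))
  have e1 : ∑ m ∈ S, t * (c' m - v) = t * ((∑ m ∈ S, c' m) - (dd:ℝ) * v) := by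
    rw [← Finset.mul_sum, Finset.sum_sub_distrib, Finset.sum_const, hScard, nsmul_eq_mul]
  have e2 : ∑ m ∈ Sᶜ, t * c' m = t * ∑ m ∈ Sᶜ, c' m := (Finset.mul_sum _ _ _).symm
  have e3 : ∑ m ∈ S, ν' m * (c' m - v) = (∑ m ∈ S, ν' m * c' m) - ∑ m ∈ S, ν' m * v := by
    simp only [mul_sub]
    rw [Finset.sum_sub_distrib]
  have e4 : v * ∑ m ∈ S, ν' m = ∑ m ∈ S, ν' m * v := by
    rw [Finset.mul_sum]; exact Finset.sum_congr rfl (fun _ _ => mul_comm _ _)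
  have hzero : t * ((∑ m ∈ S, c' m) - (dd:ℝ)*v) + t * (∑ m ∈ Sᶜ, c' m) = 0 := by
    linear_combination t * splitc
  show v * ∑ k : Fin dd, ν' (Fin.castLE hdn k) ≤ ∑ m, ν m * c m
  rw [hre, hSsum, split1, e4]
  rw [e1, e3] at hb1
  rw [e2] at hb2
  linarith

lemma kyfan {ι : Type*} [Fintype ι] [DecidableEq ι] {A : Matrix ι ι ℝ}
    (hA : A.IsHermitian) {dd : ℕ} (f : Fin dd → ι → ℝ) {v : ℝ} (hv : 0 ≤ v)
    (hgram : ∀ b c, f b ⬝ᵥ f c = if b = c then v else 0) :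
    ∃ c : ι → ℝ, (∀ p, 0 ≤ c p) ∧ (∀ p, c p ≤ v) ∧ (∑ p, c p = (dd : ℝ) * v) ∧
      ∑ b, f b ⬝ᵥ (A *ᵥ f b) = ∑ p, hA.eigenvalues p * c p := by
  classical
  set U : Matrix ι ι ℝ := (Matrix.IsHermitian.eigenvectorUnitary hA : Matrix ι ι ℝ) with hU
  have hsU : star U = Uᵀ := by
    ext i j
    simp [Matrix.star_apply]
  have hUU : U * Uᵀ = 1 := by
    rw [← hsU]
    exact (Matrix.mem_unitaryGroup_iff).mp (Matrix.IsHermitian.eigenvectorUnitary hA).2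
  set Y : Fin dd → ι → ℝ := fun b => Uᵀ *ᵥ f b with hY
  have hYgram : ∀ b c, Y b ⬝ᵥ Y c = if b = c then v else 0 := by
    intro b c
    rw [hY]
    simp only
    rw [Matrix.dotProduct_mulVec, Matrix.vecMul_mulVec, Matrix.transpose_transpose, hUU,
      Matrix.vecMul_one]
    exact hgram b c
  set c : ι → ℝ := fun p => ∑ b, (Y b p)^2 with hc
  have hc0 : ∀ p, 0 ≤ c p := fun p => Finset.sum_nonneg (fun b _ => sq_nonneg _)
  have hcsum : ∑ p, c p = (dd : ℝ) * v := by
    rw [hc]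
    rw [Finset.sum_comm]
    have : ∀ b : Fin dd, ∑ p, (Y b p)^2 = v := by
      intro b
      have := hYgram b b
      simp only [if_pos rfl, dotProduct, if_true] at this
      simpa only [pow_two] using this
    rw [Finset.sum_congr rfl (fun b _ => this b), Finset.sum_const, Finset.card_univ,
      Fintype.card_fin, nsmul_eq_mul]
  have hcv : ∀ p, c p ≤ v := by
    intro p
    set K : ι → ι → ℝ := fun p q => ∑ b, Y b p * Y b q with hK
    have hKdiag : K p p = c p := by
      rw [hK, hc]
      exact Finset.sum_congr rfl (fun b _ => (sq (Y b p)).symm ▸ (pow_two (Y b p)).symm)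
    have hKK : ∑ r, (K p r)^2 = v * K p p := by
      have expand : ∀ r, (K p r)^2 = ∑ b, ∑ b', (Y b p * Y b r) * (Y b' p * Y b' r) := by
        intro r
        rw [sq, hK, Finset.sum_mul_sum]
      rw [Finset.sum_congr rfl (fun r _ => expand r), Finset.sum_comm]
      have inner : ∀ b : Fin dd, ∑ r, ∑ b', (Y b p * Y b r) * (Y b' p * Y b' r)
          = ∑ b', (Y b p * Y b' p) * (Y b ⬝ᵥ Y b') := by
        intro b
        rw [Finset.sum_comm]
        refine Finset.sum_congr rfl (fun b' _ => ?_)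
        simp only [dotProduct, Finset.mul_sum]
        exact Finset.sum_congr rfl (fun r _ => by ring)
      rw [Finset.sum_congr rfl (fun b _ => inner b)]
      have : ∀ b : Fin dd, ∑ b', (Y b p * Y b' p) * (Y b ⬝ᵥ Y b') = (Y b p * Y b p) * v := by
        intro b
        rw [Finset.sum_eq_single b (fun b' _ hb' => by
            rw [hYgram b b', if_neg (Ne.symm hb'), mul_zero])
          (fun h => absurd (Finset.mem_univ b) h), hYgram b b, if_pos rfl]
      rw [Finset.sum_congr rfl (fun b _ => this b), ← Finset.sum_mul, hKdiag, mul_comm]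
      congr 1
    have hsingle : (K p p)^2 ≤ ∑ r, (K p r)^2 :=
      Finset.single_le_sum (f := fun r => (K p r)^2) (fun r _ => sq_nonneg _) (Finset.mem_univ p)
    rw [hKK, hKdiag] at hsingle
    rcases (hc0 p).lt_or_eq with hpos | hzero
    · nlinarith
    · rw [← hzero]; exact hv
  refine ⟨c, hc0, hcv, hcsum, ?_⟩
  have hquad : ∀ b, f b ⬝ᵥ (A *ᵥ f b) = ∑ p, hA.eigenvalues p * (Y b p)^2 := by
    intro b
    have hspec := hA.spectral_theorem
    conv_lhs => rw [hspec]
    rw [Unitary.conjStarAlgAut_apply]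
    rw [← Matrix.mulVec_mulVec, ← Matrix.mulVec_mulVec, Matrix.dotProduct_mulVec]
    have h1 : f b ᵥ* U = Y b := by
      rw [hY]
      simp only
      rw [← Matrix.vecMul_transpose, Matrix.transpose_transpose]
    have h2 : star U *ᵥ f b = Y b := by rw [hsU]
    rw [hU] at h1 h2
    rw [h1, h2]
    simp only [dotProduct, Matrix.mulVec_diagonal]
    refine Finset.sum_congr rfl (fun p _ => ?_)
    simp [Function.comp]
    ring
  rw [Finset.sum_congr rfl (fun b _ => hquad b), Finset.sum_comm]
  refine Finset.sum_congr rfl (fun p _ => ?_)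
  rw [hc, Finset.mul_sum]

lemma col_orth {d : ℕ} {M : Matrix (Fin d) (Fin d) ℝ}
    (hM : M ∈ Matrix.orthogonalGroup (Fin d) ℝ) (b c : Fin d) :
    ∑ a, M a b * M a c = if b = c then 1 else 0 := by
  have h1 : star M * M = 1 := Matrix.mem_unitaryGroup_iff'.mp hM
  have h2 := congrFun (congrFun h1 b) c
  simpa [Matrix.mul_apply, Matrix.star_apply, Matrix.one_apply] using h2

theorem stmt_19 (n d : ℕ) (hn : 0 < n) (hd : 0 < d) (hdn : d ≤ n * d)
    (w : Fin n → Fin n → ℝ)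
    (hw : ∀ i j, 0 ≤ w i j) (hwsymm : ∀ i j, w i j = w j i)
    (hdeg : ∀ i, 0 < ∑ j, w i j)
    (ρ : Fin n → Fin n → Matrix (Fin d) (Fin d) ℝ)
    (hρ : ∀ i j, ρ i j ∈ Matrix.orthogonalGroup (Fin d) ℝ)
    (hρsymm : ∀ i j, ρ j i = (ρ i j)ᵀ)
    (L1 : Matrix (Fin n × Fin d) (Fin n × Fin d) ℝ)
    (hL1 : L1 = 1 - Matrix.of (fun p q : Fin n × Fin d =>
        w p.1 q.1 * ρ p.1 q.1 p.2 q.2 /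
          (Real.sqrt (∑ j, w p.1 j) * Real.sqrt (∑ j, w q.1 j))))
    (hherm : L1.IsHermitian)
    (g : Fin n → Matrix (Fin d) (Fin d) ℝ)
    (hg : ∀ i, g i ∈ Matrix.orthogonalGroup (Fin d) ℝ) :
    (1 / (d : ℝ)) * ∑ k : Fin d,
        (fun m : Fin (n * d) => hherm.eigenvalues (finProdFinEquiv.symm m))
          (Tuple.sort (fun m : Fin (n * d) => hherm.eigenvalues (finProdFinEquiv.symm m))
            (Fin.castLE hdn k))
      ≤ (1 / (2 * (d : ℝ) * ∑ i, ∑ j, w i j)) *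
          ∑ i, ∑ j, w i j * ∑ a, ∑ b, ((g i - ρ i j * g j) a b) ^ 2 := by
  classical
  set W1 : Matrix (Fin n × Fin d) (Fin n × Fin d) ℝ := Matrix.of (fun p q : Fin n × Fin d =>
        w p.1 q.1 * ρ p.1 q.1 p.2 q.2 /
          (Real.sqrt (∑ j, w p.1 j) * Real.sqrt (∑ j, w q.1 j))) with hW1
  set D : Fin n → ℝ := fun i => ∑ j, w i j with hD
  set vol : ℝ := ∑ i, ∑ j, w i j with hvoldef
  have hvol : 0 < vol := Finset.sum_pos (fun i _ => hdeg i) ⟨⟨0, hn⟩, Finset.mem_univ _⟩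
  have hDpos : ∀ i, 0 < D i := hdeg
  have hsqrt : ∀ i, Real.sqrt (D i) ≠ 0 := fun i => (Real.sqrt_pos.mpr (hDpos i)).ne'
  set f : Fin d → (Fin n × Fin d) → ℝ := fun b p => Real.sqrt (D p.1) * g p.1 p.2 b with hf
  -- Gram matrix of the f's
  have hgram : ∀ b c, f b ⬝ᵥ f c = if b = c then vol else 0 := by
    intro b c
    have : f b ⬝ᵥ f c = ∑ i, ∑ a, (Real.sqrt (D i) * g i a b) * (Real.sqrt (D i) * g i a c) := by
      simp [dotProduct, Fintype.sum_prod_type, hf]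
    rw [this]
    have hinner : ∀ i : Fin n, ∑ a, (Real.sqrt (D i) * g i a b) * (Real.sqrt (D i) * g i a c)
        = D i * (if b = c then 1 else 0) := by
      intro i
      rw [← col_orth (hg i) b c, Finset.mul_sum]
      refine Finset.sum_congr rfl (fun a _ => ?_)
      rw [show (Real.sqrt (D i) * g i a b) * (Real.sqrt (D i) * g i a c)
          = (Real.sqrt (D i) * Real.sqrt (D i)) * (g i a b * g i a c) by ring,
        Real.mul_self_sqrt (hDpos i).le]
    rw [Finset.sum_congr rfl (fun i _ => hinner i)]
    by_cases hbc : b = c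
    · simp [hbc, hvoldef, hD]
    · simp [hbc]
  set X : ℝ := ∑ i, ∑ j, w i j * ∑ a, ∑ b, g i a b * (ρ i j * g j) a b with hX
  have hQ : ∑ b, f b ⬝ᵥ (L1 *ᵥ f b) = (d : ℝ) * vol - X := by
    have e0 : ∀ b : Fin d, f b ⬝ᵥ (L1 *ᵥ f b) = f b ⬝ᵥ f b - f b ⬝ᵥ (W1 *ᵥ f b) := by
      intro b
      rw [hL1, Matrix.sub_mulVec, dotProduct_sub, Matrix.one_mulVec]
    rw [Finset.sum_congr rfl (fun b _ => e0 b), Finset.sum_sub_distrib]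
    have e1 : ∑ b : Fin d, f b ⬝ᵥ f b = (d : ℝ) * vol := by
      rw [Finset.sum_congr rfl (fun b _ => by rw [hgram b b, if_pos rfl]),
        Finset.sum_const, Finset.card_univ, Fintype.card_fin, nsmul_eq_mul]
    rw [e1]
    congr 1
    have key : ∀ b : Fin d, f b ⬝ᵥ (W1 *ᵥ f b)
        = ∑ i, ∑ j, w i j * ∑ a, g i a b * (ρ i j * g j) a b := by
      intro b
      have e2 : f b ⬝ᵥ (W1 *ᵥ f b) = ∑ i, ∑ a, ∑ j, ∑ a',
          (Real.sqrt (D i) * g i a b) * ((w i j * ρ i j a a' /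
            (Real.sqrt (D i) * Real.sqrt (D j))) * (Real.sqrt (D j) * g j a' b)) := by
        simp only [dotProduct, mulVec, Finset.mul_sum, Fintype.sum_prod_type, hW1, hf,
          Matrix.of_apply, hD]
      rw [e2]
      have e3 : ∀ (i : Fin n) (a : Fin d) (j : Fin n) (a' : Fin d),
          (Real.sqrt (D i) * g i a b) * ((w i j * ρ i j a a' /
            (Real.sqrt (D i) * Real.sqrt (D j))) * (Real.sqrt (D j) * g j a' b))
          = w i j * (g i a b * (ρ i j a a' * g j a' b)) := by
        intro i a j a'
        field_simp [hsqrt i, hsqrt j]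
      simp only [e3]
      refine Finset.sum_congr rfl (fun i _ => ?_)
      rw [Finset.sum_comm]
      refine Finset.sum_congr rfl (fun j _ => ?_)
      rw [Finset.mul_sum]
      refine Finset.sum_congr rfl (fun a _ => ?_)
      rw [Matrix.mul_apply, Finset.mul_sum, Finset.mul_sum]
    rw [Finset.sum_congr rfl (fun b _ => key b), hX]
    rw [Finset.sum_comm]
    refine Finset.sum_congr rfl (fun i _ => ?_)
    rw [Finset.sum_comm]
    refine Finset.sum_congr rfl (fun j _ => ?_)
    rw [← Finset.mul_sum, Finset.sum_comm]
  have hS : ∑ i, ∑ j, w i j * ∑ a, ∑ b, ((g i - ρ i j * g j) a b) ^ 2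
      = 2 * (d : ℝ) * vol - 2 * X := by
    have hper : ∀ i j, ∑ a, ∑ b, ((g i - ρ i j * g j) a b) ^ 2
        = 2 * (d : ℝ) - 2 * ∑ a, ∑ b, g i a b * (ρ i j * g j) a b := by
      intro i j
      have hmem : ρ i j * g j ∈ Matrix.orthogonalGroup (Fin d) ℝ := mul_mem (hρ i j) (hg j)
      have hdiag : ∀ (M : Matrix (Fin d) (Fin d) ℝ),
          M ∈ Matrix.orthogonalGroup (Fin d) ℝ → ∑ a, ∑ b, (M a b) ^ 2 = (d : ℝ) := by
        intro M hM
        rw [Finset.sum_comm]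
        have : ∀ b : Fin d, ∑ a, (M a b) ^ 2 = 1 := by
          intro b
          have := col_orth hM b b
          simpa [pow_two] using this
        rw [Finset.sum_congr rfl (fun b _ => this b), Finset.sum_const, Finset.card_univ,
          Fintype.card_fin, nsmul_eq_mul, mul_one]
      have expand : ∀ a b : Fin d, ((g i - ρ i j * g j) a b) ^ 2
          = (g i a b) ^ 2 + ((ρ i j * g j) a b) ^ 2
            - 2 * (g i a b * (ρ i j * g j) a b) := by
        intro a b
        rw [Matrix.sub_apply]
        ring
      simp only [expand, Finset.sum_add_distrib, Finset.sum_sub_distrib, ← Finset.mul_sum]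
      rw [hdiag (g i) (hg i), hdiag _ hmem]
      ring
    rw [Finset.sum_congr rfl (fun i _ => Finset.sum_congr rfl (fun j _ => by rw [hper i j]))]
    have expand2 : ∀ i j, w i j * (2 * (d : ℝ) - 2 * ∑ a, ∑ b, g i a b * (ρ i j * g j) a b)
        = 2 * (d : ℝ) * w i j - 2 * (w i j * ∑ a, ∑ b, g i a b * (ρ i j * g j) a b) := by
      intro i j; ring
    simp only [expand2, Finset.sum_sub_distrib, ← Finset.mul_sum]
    rw [hvoldef, hX]
  obtain ⟨c, hc0, hcv, hcsum, hquad⟩ := kyfan hherm f hvol.le hgram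
  have hctrans : ∑ m : Fin (n*d), c (finProdFinEquiv.symm m) = (d:ℝ) * vol := by
    rw [Equiv.sum_comp finProdFinEquiv.symm c]; exact hcsum
  have hsort := sort_lemma hd hdn hvol.le
      (fun m : Fin (n*d) => hherm.eigenvalues (finProdFinEquiv.symm m))
      (fun m => c (finProdFinEquiv.symm m)) (fun m => hc0 _) (fun m => hcv _) hctrans
  have htrans1 : ∑ m : Fin (n*d),
      hherm.eigenvalues (finProdFinEquiv.symm m) * c (finProdFinEquiv.symm m)
      = ∑ p, hherm.eigenvalues p * c p :=
    Equiv.sum_comp finProdFinEquiv.symm (fun p => hherm.eigenvalues p * c p)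
  rw [htrans1, ← hquad, hQ] at hsort
  have hd' : (0:ℝ) < d := by exact_mod_cast hd
  rw [hS]
  set T := ∑ k : Fin d, (fun m : Fin (n*d) => hherm.eigenvalues (finProdFinEquiv.symm m))
      (Tuple.sort (fun m : Fin (n*d) => hherm.eigenvalues (finProdFinEquiv.symm m))
        (Fin.castLE hdn k)) with hT
  rw [show (1/(2*(d:ℝ)*vol))*(2*(d:ℝ)*vol - 2*X) = ((d:ℝ)*vol - X)/((d:ℝ)*vol) by
    field_simp]
  rw [show (1/(d:ℝ))*T = T/(d:ℝ) by ring]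
  rw [div_le_div_iff₀ hd' (by positivity)]
  nlinarith [mul_le_mul_of_nonneg_left hsort hd'.le]
end
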